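/- Let (X, d) be a compact metric space. Then the function d̃(μ, ν) = Σ_{n=1}^∞ 2^{−n}·d̃_n(μ, ν) is well defined (the series converges) and is a metric on I(X): it is symmetric, satisfies the triangle inequality, and d̃(μ, ν) = 0 if and only if μ = ν. -/

import Mathlib

/-- An idempotent (Maslov) probability measure on a topological space `X` is a functional
`μ : C(X, ℝ) → ℝ` that is normalized on constants, shifts under addition of constants, and
turns pointwise maxima into maxima. -/
def IsIdemMeasure {X : Type*} [TopologicalSpace X] (μ : C(X, ℝ) → ℝ) : Prop :=
  (∀ c : ℝ, μ (ContinuousMap.const X c) = c) ∧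
  (∀ (c : ℝ) (φ : C(X, ℝ)), μ (ContinuousMap.const X c + φ) = c + μ φ) ∧
  (∀ φ ψ : C(X, ℝ), μ (φ ⊔ ψ) = max (μ φ) (μ ψ))

/-- The space `I(X)` of idempotent probability measures on `X`; as a subtype of the product
`(C(X, ℝ) → ℝ)` it automatically carries the weak* (pointwise convergence) topology. -/
abbrev IdemMeasure (X : Type*) [TopologicalSpace X] :=
  {μ : C(X, ℝ) → ℝ // IsIdemMeasure μ}

/-- `n-LIP(X, d)`: the continuous functions that are Lipschitz with constant `n`. -/
def nLip (X : Type*) [MetricSpace X] (n : ℕ) : Set C(X, ℝ) :=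
  {φ | ∀ x y : X, |φ x - φ y| ≤ (n : ℝ) * dist x y}

/-- The pseudometric `d̂ₙ(μ, ν) = sup { |μ(φ) − ν(φ)| : φ ∈ n-LIP(X, d) }`. -/
noncomputable def dHat {X : Type*} [MetricSpace X] (n : ℕ) (μ ν : C(X, ℝ) → ℝ) : ℝ :=
  sSup {r : ℝ | ∃ φ ∈ nLip X n, r = |μ φ - ν φ|}

/-- `d̃ₙ = (1/n)·d̂ₙ`. -/
noncomputable def dTilde {X : Type*} [MetricSpace X] (n : ℕ) (μ ν : C(X, ℝ) → ℝ) : ℝ :=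
  (1 / (n : ℝ)) * dHat n μ ν

/-- `d̃(μ, ν) = Σ_{n=1}^∞ 2^{−n}·d̃ₙ(μ, ν)`. -/
noncomputable def dMet {X : Type*} [MetricSpace X] (μ ν : C(X, ℝ) → ℝ) : ℝ :=
  ∑' k : ℕ, (1 / 2 ^ (k + 1) : ℝ) * dTilde (k + 1) μ ν

section Aux

open Metric

variable {X : Type*}

lemma idem_mono [TopologicalSpace X] {μ : C(X, ℝ) → ℝ} (hμ : IsIdemMeasure μ)
    {φ ψ : C(X, ℝ)} (h : φ ≤ ψ) : μ φ ≤ μ ψ := by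
  have h2 := hμ.2.2 φ ψ
  rw [sup_eq_right.mpr h] at h2
  rw [h2]; exact le_max_left _ _

lemma idem_abs_le [TopologicalSpace X] {μ : C(X, ℝ) → ℝ} (hμ : IsIdemMeasure μ)
    (φ ψ : C(X, ℝ)) {c : ℝ} (h : ∀ x, |φ x - ψ x| ≤ c) : |μ φ - μ ψ| ≤ c := by
  have h1 : μ φ ≤ c + μ ψ := by
    rw [← hμ.2.1 c ψ]
    refine idem_mono hμ (ContinuousMap.le_def.mpr fun x => ?_)
    have := (abs_le.mp (h x)).2
    simp only [ContinuousMap.add_apply, ContinuousMap.const_apply]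
    linarith
  have h2 : μ ψ ≤ c + μ φ := by
    rw [← hμ.2.1 c φ]
    refine idem_mono hμ (ContinuousMap.le_def.mpr fun x => ?_)
    have := (abs_le.mp (h x)).1
    simp only [ContinuousMap.add_apply, ContinuousMap.const_apply]
    linarith
  rw [abs_sub_le_iff]; constructor <;> linarith

lemma zero_mem_nLip [MetricSpace X] (n : ℕ) : (0 : C(X, ℝ)) ∈ nLip X n := by
  intro x y
  simp [nLip]
  positivity

lemma idem_zero [TopologicalSpace X] {μ : C(X, ℝ) → ℝ} (hμ : IsIdemMeasure μ) :
    μ 0 = 0 := by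
  have := hμ.1 0
  simpa using this

/-- The set whose sup is `dHat`. -/
lemma dHat_set_nonempty [MetricSpace X] (n : ℕ) (μ ν : C(X, ℝ) → ℝ)
    (hμ : IsIdemMeasure μ) (hν : IsIdemMeasure ν) :
    (0 : ℝ) ∈ {r : ℝ | ∃ φ ∈ nLip X n, r = |μ φ - ν φ|} :=
  ⟨0, zero_mem_nLip n, by rw [idem_zero hμ, idem_zero hν]; simp⟩

lemma dHat_elem_le [MetricSpace X] [CompactSpace X] (n : ℕ) {μ ν : C(X, ℝ) → ℝ}
    (hμ : IsIdemMeasure μ) (hν : IsIdemMeasure ν) {φ : C(X, ℝ)} (hφ : φ ∈ nLip X n) :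
    |μ φ - ν φ| ≤ 2 * n * diam (Set.univ : Set X) := by
  by_cases hX : Nonempty X
  · obtain ⟨x0⟩ := hX
    set c := φ x0 with hc
    set D := diam (Set.univ : Set X) with hD
    have hbd : ∀ x : X, |φ x - (ContinuousMap.const X c) x| ≤ n * D := by
      intro x
      have h1 := hφ x x0
      have h2 : dist x x0 ≤ D :=
        dist_le_diam_of_mem isCompact_univ.isBounded trivial trivial
      have : (n : ℝ) * dist x x0 ≤ n * D := by
        apply mul_le_mul_of_nonneg_left h2 (by positivity)
      simpa using h1.trans this
    have hμc := idem_abs_le hμ φ (ContinuousMap.const X c) hbd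
    have hνc := idem_abs_le hν φ (ContinuousMap.const X c) hbd
    rw [hμ.1 c] at hμc
    rw [hν.1 c] at hνc
    have := abs_sub_abs_le_abs_sub (μ φ - c) (ν φ - c)
    have h3 : |μ φ - ν φ| ≤ |μ φ - c| + |ν φ - c| := by
      have := abs_sub (μ φ - c) (ν φ - c)
      calc |μ φ - ν φ| = |(μ φ - c) - (ν φ - c)| := by ring_nf
        _ ≤ |μ φ - c| + |ν φ - c| := abs_sub _ _
    linarith
  · have hφ0 : φ = 0 := by
      ext x; exact absurd ⟨x⟩ hX
    rw [hφ0, idem_zero hμ, idem_zero hν]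
    simp
    positivity

lemma dHat_bddAbove [MetricSpace X] [CompactSpace X] (n : ℕ) {μ ν : C(X, ℝ) → ℝ}
    (hμ : IsIdemMeasure μ) (hν : IsIdemMeasure ν) :
    BddAbove {r : ℝ | ∃ φ ∈ nLip X n, r = |μ φ - ν φ|} := by
  refine ⟨2 * n * diam (Set.univ : Set X), fun r hr => ?_⟩
  obtain ⟨φ, hφ, rfl⟩ := hr
  exact dHat_elem_le n hμ hν hφ

lemma dHat_nonneg [MetricSpace X] [CompactSpace X] (n : ℕ) {μ ν : C(X, ℝ) → ℝ}
    (hμ : IsIdemMeasure μ) (hν : IsIdemMeasure ν) : 0 ≤ dHat n μ ν :=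
  le_csSup (dHat_bddAbove n hμ hν) (dHat_set_nonempty n μ ν hμ hν)

lemma dHat_le [MetricSpace X] [CompactSpace X] (n : ℕ) {μ ν : C(X, ℝ) → ℝ}
    (hμ : IsIdemMeasure μ) (hν : IsIdemMeasure ν) :
    dHat n μ ν ≤ 2 * n * diam (Set.univ : Set X) := by
  apply Real.sSup_le
  · rintro r ⟨φ, hφ, rfl⟩
    exact dHat_elem_le n hμ hν hφ
  · positivity

lemma abs_le_dHat [MetricSpace X] [CompactSpace X] (n : ℕ) {μ ν : C(X, ℝ) → ℝ}
    (hμ : IsIdemMeasure μ) (hν : IsIdemMeasure ν) {φ : C(X, ℝ)} (hφ : φ ∈ nLip X n) :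
    |μ φ - ν φ| ≤ dHat n μ ν :=
  le_csSup (dHat_bddAbove n hμ hν) ⟨φ, hφ, rfl⟩

lemma dHat_symm [MetricSpace X] (n : ℕ) (μ ν : C(X, ℝ) → ℝ) :
    dHat n μ ν = dHat n ν μ := by
  unfold dHat
  congr 1
  ext r
  constructor <;> rintro ⟨φ, hφ, rfl⟩ <;> exact ⟨φ, hφ, (abs_sub_comm _ _)⟩

lemma dHat_triangle [MetricSpace X] [CompactSpace X] (n : ℕ) {μ ν τ : C(X, ℝ) → ℝ}
    (hμ : IsIdemMeasure μ) (hν : IsIdemMeasure ν) (hτ : IsIdemMeasure τ) :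
    dHat n μ τ ≤ dHat n μ ν + dHat n ν τ := by
  apply Real.sSup_le
  · rintro r ⟨φ, hφ, rfl⟩
    calc |μ φ - τ φ| ≤ |μ φ - ν φ| + |ν φ - τ φ| := abs_sub_le _ _ _
      _ ≤ dHat n μ ν + dHat n ν τ :=
        add_le_add (abs_le_dHat n hμ hν hφ) (abs_le_dHat n hν hτ hφ)
  · exact add_nonneg (dHat_nonneg n hμ hν) (dHat_nonneg n hν hτ)

/-- Lipschitz approximation: every continuous function on a compact metric space is uniformly
approximated by functions in `nLip X n` for some `n ≥ 1`. -/
lemma exists_nLip_approx [MetricSpace X] [CompactSpace X] (φ : C(X, ℝ)) {ε : ℝ} (hε : 0 < ε) :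
    ∃ n : ℕ, ∃ ψ ∈ nLip X (n + 1), ∀ x, |φ x - ψ x| ≤ ε := by
  by_cases hX : Nonempty X
  · haveI := hX
    obtain ⟨x0⟩ := hX
    have huc : UniformContinuous (φ : X → ℝ) :=
      CompactSpace.uniformContinuous_of_continuous φ.continuous
    rw [Metric.uniformContinuous_iff] at huc
    obtain ⟨δ, hδ, hδ'⟩ := huc ε hε
    set M := ‖φ‖ with hM
    have hMb : ∀ x, |φ x| ≤ M := fun x => φ.norm_coe_le_norm x
    obtain ⟨N, hN⟩ := exists_nat_ge (2 * M / δ)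
    set n : ℕ := N + 1 with hn
    have hnδ : 2 * M ≤ (n : ℝ) * δ := by
      have hNn : (2 * M / δ) ≤ (n : ℝ) := by
        push_cast [hn]
        linarith
      calc 2 * M = (2 * M / δ) * δ := by field_simp
        _ ≤ (n : ℝ) * δ := by apply mul_le_mul_of_nonneg_right hNn hδ.le
    set g : X → ℝ := fun x => ⨅ y, (φ y + n * dist x y) with hg
    have hbdd : ∀ x : X, BddBelow (Set.range fun y => φ y + (n : ℝ) * dist x y) := by
      intro x
      refine ⟨-M, ?_⟩
      rintro r ⟨y, rfl⟩
      dsimp only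
      have h1 : (0:ℝ) ≤ (n : ℝ) * dist x y := by positivity
      have h2 := (abs_le.mp (hMb y)).1
      linarith
    have hgle : ∀ x, g x ≤ φ x := by
      intro x
      have := ciInf_le (hbdd x) x
      simpa using this
    have hlip : ∀ x x' : X, g x ≤ g x' + n * dist x x' := by
      intro x x'
      rw [hg]
      rw [← sub_le_iff_le_add]
      apply le_ciInf
      intro y
      have h1 : g x ≤ φ y + n * dist x y := ciInf_le (hbdd x) y
      have h2 : dist x y ≤ dist x x' + dist x' y := dist_triangle x x' y
      have : (n:ℝ) * dist x y ≤ n * dist x x' + n * dist x' y := by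
        rw [← mul_add]
        exact mul_le_mul_of_nonneg_left h2 (by positivity)
      linarith
    have hglip : ∀ x y : X, |g x - g y| ≤ (n : ℝ) * dist x y := by
      intro x y
      rw [abs_sub_le_iff]
      constructor
      · have := hlip x y; rw [dist_comm] at this ⊢; linarith [hlip x y]
      · have := hlip y x; rw [dist_comm x y]; linarith
    have hcont : Continuous g := by
      have : LipschitzWith (n : NNReal) g := by
        apply LipschitzWith.of_dist_le_mul
        intro x y
        rw [Real.dist_eq]
        have := hglip x y
        push_cast [hn] at this ⊢
        exact this
      exact this.continuous
    have hεg : ∀ x, φ x - ε ≤ g x := by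
      intro x
      apply le_ciInf
      intro y
      by_cases hd : dist x y < δ
      · have := hδ' hd
        rw [Real.dist_eq] at this
        have h1 := (abs_lt.mp this).2
        have : (0:ℝ) ≤ (n:ℝ) * dist x y := by positivity
        linarith
      · push_neg at hd
        have h1 : (n : ℝ) * δ ≤ n * dist x y :=
          mul_le_mul_of_nonneg_left hd (by positivity)
        have h2 := (abs_le.mp (hMb y)).1
        have h3 := (abs_le.mp (hMb x)).2
        linarith
    refine ⟨N, ⟨g, hcont⟩, ?_, ?_⟩
    · intro x y
      simpa [hn] using hglip x y
    · intro x
      simp only [ContinuousMap.coe_mk]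
      rw [abs_le]
      constructor
      · linarith [hgle x]
      · linarith [hεg x]
  · refine ⟨0, φ, fun x y => absurd ⟨x⟩ hX, fun x => absurd ⟨x⟩ hX⟩

end Aux
/-- For a compact metric space `(X, d)`, the series defining
`d̃(μ, ν) = Σ_{n=1}^∞ 2^{−n}·d̃ₙ(μ, ν)` converges, and `d̃` is a metric on `I(X)`: it is
symmetric, satisfies the triangle inequality, and vanishes exactly on the diagonal. -/
theorem statement6 {X : Type*} [MetricSpace X] [CompactSpace X]
    (μ ν τ : C(X, ℝ) → ℝ) (hμ : IsIdemMeasure μ) (hν : IsIdemMeasure ν)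
    (hτ : IsIdemMeasure τ) :
    Summable (fun k : ℕ => (1 / 2 ^ (k + 1) : ℝ) * dTilde (k + 1) μ ν) ∧
    dMet μ ν = dMet ν μ ∧
    dMet μ τ ≤ dMet μ ν + dMet ν τ ∧
    (dMet μ ν = 0 ↔ μ = ν) := by
  classical
  set D := Metric.diam (Set.univ : Set X) with hD
  have hDnn : 0 ≤ D := Metric.diam_nonneg
  -- general summability for any pair of idempotent measures
  have hsum : ∀ {α β : C(X, ℝ) → ℝ}, IsIdemMeasure α → IsIdemMeasure β →
      Summable (fun k : ℕ => (1 / 2 ^ (k + 1) : ℝ) * dTilde (k + 1) α β) := by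
    intro α β hα hβ
    have hgeo : Summable (fun k : ℕ => (2 * D) * (1 / 2 : ℝ) ^ k) :=
      (summable_geometric_two).mul_left _
    apply Summable.of_nonneg_of_le
    · intro k
      have h0 : (0:ℝ) ≤ dHat (k + 1) α β := dHat_nonneg _ hα hβ
      unfold dTilde
      positivity
    · intro k
      have h1 : dHat (k + 1) α β ≤ 2 * (k + 1 : ℕ) * D := by
        simpa using dHat_le (k + 1) hα hβ
      have hk1 : (0:ℝ) < ((k : ℝ) + 1) := by positivity
      have h2 : dTilde (k + 1) α β ≤ 2 * D := by
        unfold dTilde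
        rw [div_mul_eq_mul_div, div_le_iff₀ (by push_cast; exact hk1)]
        push_cast at h1 ⊢
        calc 1 * dHat (k+1) α β = dHat (k+1) α β := one_mul _
          _ ≤ 2 * ((k:ℝ) + 1) * D := h1
          _ = 2 * D * ((k:ℝ) + 1) := by ring
      calc (1 / 2 ^ (k + 1) : ℝ) * dTilde (k + 1) α β
          ≤ (1 / 2 ^ (k + 1) : ℝ) * (2 * D) := by
            apply mul_le_mul_of_nonneg_left h2 (by positivity)
        _ ≤ (2 * D) * (1 / 2 : ℝ) ^ k := by
            have heq : (1 / 2 ^ (k + 1) : ℝ) * (2 * D) = D * (1 / 2 : ℝ) ^ k := by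
              rw [div_pow, one_pow, pow_succ]
              field_simp
            rw [heq]
            have := pow_nonneg (by norm_num : (0:ℝ) ≤ 1/2) k
            nlinarith
    · exact hgeo
  have hsμν := hsum hμ hν
  have hsνμ := hsum hν hμ
  have hsμτ := hsum hμ hτ
  have hsντ := hsum hν hτ
  refine ⟨hsμν, ?_, ?_, ?_⟩
  · -- symmetry
    unfold dMet
    congr 1
    ext k
    unfold dTilde
    rw [dHat_symm]
  · -- triangle
    unfold dMet
    have hle : ∀ k : ℕ, (1 / 2 ^ (k + 1) : ℝ) * dTilde (k + 1) μ τ ≤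
        (1 / 2 ^ (k + 1) : ℝ) * dTilde (k + 1) μ ν +
        (1 / 2 ^ (k + 1) : ℝ) * dTilde (k + 1) ν τ := by
      intro k
      rw [← mul_add]
      apply mul_le_mul_of_nonneg_left _ (by positivity)
      unfold dTilde
      rw [← mul_add]
      apply mul_le_mul_of_nonneg_left _ (by positivity)
      exact dHat_triangle _ hμ hν hτ
    calc ∑' k : ℕ, (1 / 2 ^ (k + 1) : ℝ) * dTilde (k + 1) μ τ
        ≤ ∑' k : ℕ, ((1 / 2 ^ (k + 1) : ℝ) * dTilde (k + 1) μ ν +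
          (1 / 2 ^ (k + 1) : ℝ) * dTilde (k + 1) ν τ) :=
          Summable.tsum_le_tsum hle hsμτ (hsμν.add hsντ)
      _ = _ := Summable.tsum_add hsμν hsντ
  · constructor
    · -- dMet = 0 → μ = ν
      intro h0
      have hterm : ∀ k : ℕ, (1 / 2 ^ (k + 1) : ℝ) * dTilde (k + 1) μ ν = 0 := by
        intro k
        have hnn : ∀ j : ℕ, 0 ≤ (1 / 2 ^ (j + 1) : ℝ) * dTilde (j + 1) μ ν := by
          intro j
          have := dHat_nonneg (j + 1) hμ hν
          unfold dTilde
          positivity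
        have hle := Summable.le_tsum hsμν k (fun j _ => hnn j)
        have := hnn k
        unfold dMet at h0
        linarith [hle.trans_eq h0]
      have hdHat : ∀ k : ℕ, dHat (k + 1) μ ν = 0 := by
        intro k
        have h := hterm k
        have hk1 : ((k : ℝ) + 1) ≠ 0 := by positivity
        unfold dTilde at h
        have h2 : (1 / 2 ^ (k + 1) : ℝ) ≠ 0 := by positivity
        have h3 : (1 / ((k+1 : ℕ) : ℝ)) ≠ 0 := by
          push_cast
          simp [hk1]
        field_simp at h
        simpa using h
      have hagree : ∀ (k : ℕ) (φ : C(X, ℝ)), φ ∈ nLip X (k + 1) → μ φ = ν φ := by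
        intro k φ hφ
        have h1 := abs_le_dHat (k + 1) hμ hν hφ
        rw [hdHat k] at h1
        have := abs_nonneg (μ φ - ν φ)
        have : |μ φ - ν φ| = 0 := le_antisymm h1 this
        exact sub_eq_zero.mp (abs_eq_zero.mp this)
      funext φ
      have hdiff : ∀ ε : ℝ, 0 < ε → |μ φ - ν φ| ≤ 2 * ε := by
        intro ε hε
        obtain ⟨n, ψ, hψ, happ⟩ := exists_nLip_approx φ hε
        have h1 : |μ φ - μ ψ| ≤ ε := idem_abs_le hμ φ ψ happ
        have h2 : |ν φ - ν ψ| ≤ ε := idem_abs_le hν φ ψ happ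
        have h3 : μ ψ = ν ψ := hagree n ψ hψ
        calc |μ φ - ν φ| = |(μ φ - μ ψ) - (ν φ - ν ψ)| := by rw [h3]; ring_nf
          _ ≤ |μ φ - μ ψ| + |ν φ - ν ψ| := abs_sub _ _
          _ ≤ 2 * ε := by linarith
      have : |μ φ - ν φ| ≤ 0 := by
        by_contra hc
        push_neg at hc
        have := hdiff (|μ φ - ν φ| / 4) (by linarith)
        linarith
      exact sub_eq_zero.mp (abs_eq_zero.mp (le_antisymm this (abs_nonneg _)))
    · -- μ = ν → dMet = 0
      rintro rfl
      unfold dMet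
      have : ∀ k : ℕ, (1 / 2 ^ (k + 1) : ℝ) * dTilde (k + 1) μ μ = 0 := by
        intro k
        have h1 : dHat (k + 1) μ μ ≤ 0 := by
          apply Real.sSup_le
          · rintro r ⟨ψ, hψ, rfl⟩
            simp
          · exact le_refl 0
        have h2 : 0 ≤ dHat (k + 1) μ μ := dHat_nonneg _ hμ hμ
        unfold dTilde
        rw [le_antisymm h1 h2]
        ring
      simp only [this]
      exact tsum_zero
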